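/- arXiv:2405.05503 — 5 statements merged into one kernel-verified Lean document; each statement's English description precedes it below -/
import Mathlib

section
/- Let p ≥ 1 be an integer, α, γ_g, γ_s > 0, ρ ∈ (0,1), Σ ∈ ℝ^{p×p} symmetric positive definite, and A > 0. Define the GS density f_M(n) = ρ·k₁·exp(−‖n‖²/(4γ_g²)) + (1−ρ)·k₂·(1 + nᵀΣ⁻¹n/α)^{−(α+p)/2}, where k₁ = (2√π γ_g)^{−p} and k₂ = Γ((α+p)/2)/(Γ(α/2)(απ)^{p/2}√(det Σ)). Let Ω = {n : f_M(n + 2A·e_p) > f_M(n)}, Ω_A = {n : e_pᵀn < −pA}, and Ω_B = {n : e_pᵀΣ⁻¹n < −A·e_pᵀΣ⁻¹e_p}. Then Ω_A ∩ Ω_B ⊆ Ω ⊆ Ω_A ∪ Ω_B. -/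
open Matrix Real

/-- Sandwich inclusion for the ML BPSK error region under the GS bursty mixed-noise density:
with `Ω = {n : f_M(n + 2A·e_p) > f_M(n)}`, `Ω_A = {n : e_pᵀn < −pA}` and
`Ω_B = {n : e_pᵀΣ⁻¹n < −A·e_pᵀΣ⁻¹e_p}`, one has `Ω_A ∩ Ω_B ⊆ Ω ⊆ Ω_A ∪ Ω_B`. -/
theorem error_region_sandwich (p : ℕ) (hp : 1 ≤ p) (α γg γs ρ A : ℝ)
    (hα : 0 < α) (hγg : 0 < γg) (hγs : 0 < γs) (hρ : ρ ∈ Set.Ioo (0 : ℝ) 1) (hA : 0 < A)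
    (Cov : Matrix (Fin p) (Fin p) ℝ) (hCov : Cov.PosDef)
    (f : (Fin p → ℝ) → ℝ)
    (hf : ∀ n, f n =
        ρ * ((2 * Real.sqrt π * γg) ^ p)⁻¹ * Real.exp (-(∑ i, n i ^ 2) / (4 * γg ^ 2))
        + (1 - ρ) *
            (Real.Gamma ((α + p) / 2) /
              (Real.Gamma (α / 2) * (α * π) ^ ((p : ℝ) / 2) * Real.sqrt Cov.det)) *
            (1 + (n ⬝ᵥ (Cov⁻¹ *ᵥ n)) / α) ^ (-(α + (p : ℝ)) / 2)) :
    ({n : Fin p → ℝ | (fun _ => (1 : ℝ)) ⬝ᵥ n < -((p : ℝ) * A)} ∩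
        {n : Fin p → ℝ | (fun _ => (1 : ℝ)) ⬝ᵥ (Cov⁻¹ *ᵥ n)
            < -(A * ((fun _ => (1 : ℝ)) ⬝ᵥ (Cov⁻¹ *ᵥ (fun _ => (1 : ℝ)))))}
        ⊆ {n : Fin p → ℝ | f (n + fun _ => 2 * A) > f n})
    ∧ ({n : Fin p → ℝ | f (n + fun _ => 2 * A) > f n}
        ⊆ {n : Fin p → ℝ | (fun _ => (1 : ℝ)) ⬝ᵥ n < -((p : ℝ) * A)} ∪
          {n : Fin p → ℝ | (fun _ => (1 : ℝ)) ⬝ᵥ (Cov⁻¹ *ᵥ n)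
              < -(A * ((fun _ => (1 : ℝ)) ⬝ᵥ (Cov⁻¹ *ᵥ (fun _ => (1 : ℝ)))))}) := by
  set e : Fin p → ℝ := fun _ => (1 : ℝ) with he
  set v : Fin p → ℝ := fun _ => 2 * A with hv
  set M : Matrix (Fin p) (Fin p) ℝ := Cov⁻¹ with hM
  have hMpd : M.PosDef := hCov.inv
  have hMsym : Mᵀ = M := by
    have := hMpd.isHermitian.eq
    rwa [conjTranspose_eq_transpose_of_trivial] at this
  have hsymm : ∀ x y : Fin p → ℝ, x ⬝ᵥ (M *ᵥ y) = y ⬝ᵥ (M *ᵥ x) := by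
    intro x y
    rw [dotProduct_mulVec, ← mulVec_transpose, hMsym, dotProduct_comm]
  have hvs : v = (2 * A) • e := by funext i; simp [hv, he]
  -- quadratic expansion
  have hquad : ∀ n : Fin p → ℝ,
      (n + v) ⬝ᵥ (M *ᵥ (n + v))
        = n ⬝ᵥ (M *ᵥ n) + 4 * A * (e ⬝ᵥ (M *ᵥ n)) + 4 * A ^ 2 * (e ⬝ᵥ (M *ᵥ e)) := by
    intro n
    have h1 : v ⬝ᵥ (M *ᵥ n) = 2 * A * (e ⬝ᵥ (M *ᵥ n)) := by
      rw [hvs, smul_dotProduct, smul_eq_mul]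
    have h2 : n ⬝ᵥ (M *ᵥ v) = 2 * A * (e ⬝ᵥ (M *ᵥ n)) := by
      rw [hsymm]; exact h1
    have h3 : v ⬝ᵥ (M *ᵥ v) = 2 * A * (2 * A * (e ⬝ᵥ (M *ᵥ e))) := by
      rw [hvs, mulVec_smul, dotProduct_smul, smul_dotProduct, smul_eq_mul, smul_eq_mul]
    rw [mulVec_add, dotProduct_add, add_dotProduct, add_dotProduct, h1, h2, h3]
    ring
  -- gaussian sum expansion
  have hsum : ∀ n : Fin p → ℝ,
      (∑ i, (n + v) i ^ 2) = (∑ i, n i ^ 2) + 4 * A * (e ⬝ᵥ n) + (p : ℝ) * (4 * A ^ 2) := by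
    intro n
    have h0 : ∀ i : Fin p, (n + v) i ^ 2 = n i ^ 2 + (4 * A) * n i + 4 * A ^ 2 := by
      intro i; simp only [Pi.add_apply, hv]; ring
    have hd : e ⬝ᵥ n = ∑ i, n i := by simp [dotProduct, he]
    simp only [h0, Finset.sum_add_distrib, Finset.sum_const, Finset.card_univ,
      Fintype.card_fin, ← Finset.mul_sum, nsmul_eq_mul, hd]
    try ring
  -- component functions
  set G : (Fin p → ℝ) → ℝ := fun n => Real.exp (-(∑ i, n i ^ 2) / (4 * γg ^ 2)) with hG
  set S : (Fin p → ℝ) → ℝ := fun n => (1 + (n ⬝ᵥ (M *ᵥ n)) / α) ^ (-(α + (p : ℝ)) / 2) with hS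
  set c1 : ℝ := ρ * ((2 * Real.sqrt π * γg) ^ p)⁻¹ with hc1
  set c2 : ℝ := (1 - ρ) *
      (Real.Gamma ((α + p) / 2) /
        (Real.Gamma (α / 2) * (α * π) ^ ((p : ℝ) / 2) * Real.sqrt Cov.det)) with hc2
  have hfc : ∀ n, f n = c1 * G n + c2 * S n := fun n => hf n
  have hc1pos : 0 < c1 := by
    apply mul_pos hρ.1
    apply inv_pos.mpr
    apply pow_pos
    have : 0 < Real.sqrt π := Real.sqrt_pos.mpr Real.pi_pos
    positivity
  have hc2pos : 0 < c2 := by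
    apply mul_pos (by linarith [hρ.2])
    apply div_pos
    · exact Real.Gamma_pos_of_pos (by positivity)
    · have h1 : 0 < Real.Gamma (α / 2) := Real.Gamma_pos_of_pos (by positivity)
      have h2 : (0:ℝ) < (α * π) ^ ((p : ℝ) / 2) :=
        Real.rpow_pos_of_pos (mul_pos hα Real.pi_pos) _
      have h3 : 0 < Real.sqrt Cov.det := Real.sqrt_pos.mpr hCov.det_pos
      positivity
  have hγ4 : (0:ℝ) < 4 * γg ^ 2 := by positivity
  -- e⊤ M e > 0
  have hene : e ≠ 0 := by
    intro h
    have := congrFun h ⟨0, hp⟩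
    simp [he] at this
  have heMe : 0 < e ⬝ᵥ (M *ᵥ e) := by
    have := hMpd.dotProduct_mulVec_pos hene
    simpa using this
  have hqnn : ∀ n : Fin p → ℝ, 0 ≤ n ⬝ᵥ (M *ᵥ n) := by
    intro n
    have := hMpd.posSemidef.dotProduct_mulVec_nonneg n
    simpa using this
  have hzneg : -(α + (p : ℝ)) / 2 < 0 := by
    have : (0:ℝ) < α + p := by positivity
    linarith
  -- Gaussian iff
  have hGiff : ∀ n : Fin p → ℝ, (G (n + v) > G n ↔ e ⬝ᵥ n < -((p : ℝ) * A)) := by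
    intro n
    rw [hG]
    simp only
    rw [gt_iff_lt, Real.exp_lt_exp, div_lt_div_iff_of_pos_right hγ4, neg_lt_neg_iff, hsum n]
    constructor
    · intro h; nlinarith
    · intro h; nlinarith
  -- Student iff
  have hSiff : ∀ n : Fin p → ℝ,
      (S (n + v) > S n ↔ e ⬝ᵥ (M *ᵥ n) < -(A * (e ⬝ᵥ (M *ᵥ e)))) := by
    intro n
    rw [hS]
    simp only
    have hb1 : (0:ℝ) < 1 + (n ⬝ᵥ (M *ᵥ n)) / α := by
      have := hqnn n; positivity
    have hb2 : (0:ℝ) < 1 + ((n + v) ⬝ᵥ (M *ᵥ (n + v))) / α := by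
      have := hqnn (n + v); positivity
    rw [gt_iff_lt]
    rw [show ((1 + (n ⬝ᵥ (M *ᵥ n)) / α) ^ (-(α + (p : ℝ)) / 2)
          < (1 + ((n + v) ⬝ᵥ (M *ᵥ (n + v))) / α) ^ (-(α + (p : ℝ)) / 2))
        ↔ (1 + ((n + v) ⬝ᵥ (M *ᵥ (n + v))) / α < 1 + (n ⬝ᵥ (M *ᵥ n)) / α) from
      Real.rpow_lt_rpow_iff_of_neg hb1 hb2 hzneg]
    rw [add_lt_add_iff_left, div_lt_div_iff_of_pos_right hα, hquad n]
    constructor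
    · intro h; nlinarith
    · intro h; nlinarith
  constructor
  · rintro n ⟨hnA, hnB⟩
    simp only [Set.mem_setOf_eq] at hnA hnB ⊢
    rw [hfc, hfc]
    have hGlt : G n < G (n + v) := (hGiff n).mpr hnA
    have hSlt : S n < S (n + v) := (hSiff n).mpr hnB
    have := add_lt_add (mul_lt_mul_of_pos_left hGlt hc1pos) (mul_lt_mul_of_pos_left hSlt hc2pos)
    exact this
  · intro n hn
    simp only [Set.mem_setOf_eq] at hn
    by_contra hc
    simp only [Set.mem_union, Set.mem_setOf_eq, not_or, not_lt] at hc
    obtain ⟨h1, h2⟩ := hc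
    have hGle : G (n + v) ≤ G n := by
      by_contra h
      exact absurd ((hGiff n).mp (lt_of_not_ge h)) (not_lt.mpr h1)
    have hSle : S (n + v) ≤ S n := by
      by_contra h
      exact absurd ((hSiff n).mp (lt_of_not_ge h)) (not_lt.mpr h2)
    rw [hfc, hfc] at hn
    nlinarith
end

section
/- Let p ≥ 1 be an integer, α, γ_g, γ_s > 0, ρ ∈ (0,1), Σ ∈ ℝ^{p×p} symmetric positive definite, and A > 0. With f_M, Ω, Ω_A, Ω_B as in the sandwich set inclusion (f_M the GS density, Ω = {n : f_M(n+2A·e_p) > f_M(n)}, Ω_A = {n : e_pᵀn < −pA}, Ω_B = {n : e_pᵀΣ⁻¹n < −A·e_pᵀΣ⁻¹e_p}), the bit error probability P_e = ∫_Ω f_M(n) dn satisfies ∫_{Ω_A ∩ Ω_B} f_M(n) dn ≤ P_e ≤ ∫_{Ω_A ∪ Ω_B} f_M(n) dn. -/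
open Matrix Real MeasureTheory

set_option maxHeartbeats 1000000

private lemma aux_cs {p : ℕ} (N : Fin p → Fin p → ℝ) (y : Fin p → ℝ) :
    ∑ i, (∑ j, N i j * y j) * (∑ j, N i j * y j)
      ≤ (∑ i, ∑ j, N i j ^ 2) * ∑ j, y j * y j := by
  calc ∑ i, (∑ j, N i j * y j) * (∑ j, N i j * y j)
      = ∑ i, (∑ j, N i j * y j) ^ 2 := by simp [sq]
    _ ≤ ∑ i, (∑ j, N i j ^ 2) * (∑ j, y j ^ 2) :=
        Finset.sum_le_sum fun i _ => Finset.sum_mul_sq_le_sq_mul_sq _ _ _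
    _ = (∑ i, ∑ j, N i j ^ 2) * ∑ j, y j * y j := by
        rw [← Finset.sum_mul]; simp [sq]

private lemma symm_shift {p : ℕ} (B : Matrix (Fin p) (Fin p) ℝ)
    (hs : ∀ i j, B i j = B j i) (x y : Fin p → ℝ) :
    x ⬝ᵥ (B *ᵥ y) = (B *ᵥ x) ⬝ᵥ y := by
  simp only [dotProduct, mulVec, Finset.mul_sum, Finset.sum_mul]
  rw [Finset.sum_comm]
  refine Finset.sum_congr rfl fun i _ => Finset.sum_congr rfl fun j _ => ?_
  rw [hs j i]; ring

private lemma quad_expand {p : ℕ} (M : Matrix (Fin p) (Fin p) ℝ)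
    (hs : ∀ i j, M i j = M j i) (x c : Fin p → ℝ) :
    (x + c) ⬝ᵥ (M *ᵥ (x + c))
      = x ⬝ᵥ (M *ᵥ x) + 2 * (c ⬝ᵥ (M *ᵥ x)) + c ⬝ᵥ (M *ᵥ c) := by
  have h1 : x ⬝ᵥ (M *ᵥ c) = c ⬝ᵥ (M *ᵥ x) := by
    rw [symm_shift M hs, dotProduct_comm]
  simp only [Matrix.mulVec_add, dotProduct_add, add_dotProduct, h1]
  ring

open scoped MatrixOrder in
private lemma posdef_lb {p : ℕ} {M : Matrix (Fin p) (Fin p) ℝ} (hM : M.PosDef) :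
    ∃ c : ℝ, 0 < c ∧ ∀ x : Fin p → ℝ, c * (x ⬝ᵥ x) ≤ x ⬝ᵥ (M *ᵥ x) := by
  set B := CFC.sqrt M with hBdef
  have hBB : B * B = M := CFC.sqrt_mul_sqrt_self M hM.posSemidef.nonneg
  have hBsd : B.PosSemidef := (CFC.sqrt_nonneg M).posSemidef
  have hBsym : ∀ i j, B i j = B j i := by
    intro i j
    have h2 := congrFun (congrFun hBsd.1 i) j
    simpa [Matrix.conjTranspose_apply] using h2.symm
  have hMdet : 0 < M.det := hM.det_pos
  have hBdetsq : B.det * B.det = M.det := by rw [← Matrix.det_mul, hBB]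
  have hBdet : IsUnit B.det := by
    refine isUnit_iff_ne_zero.mpr fun h => ?_
    rw [h, mul_zero] at hBdetsq
    exact hMdet.ne' hBdetsq.symm
  have hinv : B⁻¹ * B = 1 := Matrix.nonsing_inv_mul B hBdet
  set C : ℝ := (∑ i, ∑ j, (B⁻¹) i j ^ 2) + 1 with hC
  have hCpos : 0 < C := by positivity
  refine ⟨C⁻¹, by positivity, fun x => ?_⟩
  have hxid : (B⁻¹) *ᵥ (B *ᵥ x) = x := by
    rw [Matrix.mulVec_mulVec, hinv, Matrix.one_mulVec]
  have hnn : (0 : ℝ) ≤ (B *ᵥ x) ⬝ᵥ (B *ᵥ x) :=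
    Finset.sum_nonneg fun i _ => mul_self_nonneg _
  have h1 : x ⬝ᵥ x ≤ C * ((B *ᵥ x) ⬝ᵥ (B *ᵥ x)) := by
    have hcs := aux_cs (fun i j => (B⁻¹) i j) (B *ᵥ x)
    have hL : x ⬝ᵥ x
        = ∑ i, (∑ j, (B⁻¹) i j * (B *ᵥ x) j) * (∑ j, (B⁻¹) i j * (B *ᵥ x) j) := by
      conv_lhs => rw [← hxid]
      simp [dotProduct, mulVec]
    have hR : (B *ᵥ x) ⬝ᵥ (B *ᵥ x) = ∑ j, (B *ᵥ x) j * (B *ᵥ x) j := rfl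
    rw [hL, hR]
    refine le_trans hcs ?_
    apply mul_le_mul_of_nonneg_right _ (hR ▸ hnn)
    rw [hC]; linarith
  have h2 : (B *ᵥ x) ⬝ᵥ (B *ᵥ x) = x ⬝ᵥ (M *ᵥ x) := by
    rw [← hBB, ← Matrix.mulVec_mulVec, symm_shift B hBsym x (B *ᵥ x)]
  rw [← h2]
  calc C⁻¹ * (x ⬝ᵥ x) ≤ C⁻¹ * (C * ((B *ᵥ x) ⬝ᵥ (B *ᵥ x))) :=
        mul_le_mul_of_nonneg_left h1 (by positivity)
    _ = (B *ᵥ x) ⬝ᵥ (B *ᵥ x) := by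
        rw [← mul_assoc, inv_mul_cancel₀ hCpos.ne', one_mul]

/-- The BPSK bit error probability `P_e = ∫_Ω f_M` under the GS density is sandwiched between
the integrals of `f_M` over `Ω_A ∩ Ω_B` and over `Ω_A ∪ Ω_B`, where
`Ω = {n : f_M(n + 2A·e_p) > f_M(n)}`, `Ω_A = {n : e_pᵀn < −pA}` and
`Ω_B = {n : e_pᵀΣ⁻¹n < −A·e_pᵀΣ⁻¹e_p}`. -/
theorem error_probability_sandwich (p : ℕ) (hp : 1 ≤ p) (α γg γs ρ A : ℝ)
    (hα : 0 < α) (hγg : 0 < γg) (hγs : 0 < γs) (hρ : ρ ∈ Set.Ioo (0 : ℝ) 1) (hA : 0 < A)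
    (Cov : Matrix (Fin p) (Fin p) ℝ) (hCov : Cov.PosDef)
    (f : (Fin p → ℝ) → ℝ)
    (hf : ∀ n, f n =
        ρ * ((2 * Real.sqrt π * γg) ^ p)⁻¹ * Real.exp (-(∑ i, n i ^ 2) / (4 * γg ^ 2))
        + (1 - ρ) *
            (Real.Gamma ((α + p) / 2) /
              (Real.Gamma (α / 2) * (α * π) ^ ((p : ℝ) / 2) * Real.sqrt Cov.det)) *
            (1 + (n ⬝ᵥ (Cov⁻¹ *ᵥ n)) / α) ^ (-(α + (p : ℝ)) / 2)) :
    (∫ n in ({n : Fin p → ℝ | (fun _ => (1 : ℝ)) ⬝ᵥ n < -((p : ℝ) * A)} ∩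
        {n : Fin p → ℝ | (fun _ => (1 : ℝ)) ⬝ᵥ (Cov⁻¹ *ᵥ n)
            < -(A * ((fun _ => (1 : ℝ)) ⬝ᵥ (Cov⁻¹ *ᵥ (fun _ => (1 : ℝ)))))}), f n)
      ≤ (∫ n in {n : Fin p → ℝ | f (n + fun _ => 2 * A) > f n}, f n)
    ∧ (∫ n in {n : Fin p → ℝ | f (n + fun _ => 2 * A) > f n}, f n)
      ≤ (∫ n in ({n : Fin p → ℝ | (fun _ => (1 : ℝ)) ⬝ᵥ n < -((p : ℝ) * A)} ∪
          {n : Fin p → ℝ | (fun _ => (1 : ℝ)) ⬝ᵥ (Cov⁻¹ *ᵥ n)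
              < -(A * ((fun _ => (1 : ℝ)) ⬝ᵥ (Cov⁻¹ *ᵥ (fun _ => (1 : ℝ)))))}), f n) := by
  obtain ⟨hρ0, hρ1⟩ := hρ
  have hM : (Cov⁻¹).PosDef := hCov.inv
  have hs : ∀ i j, Cov⁻¹ i j = Cov⁻¹ j i := by
    intro i j
    have h2 := congrFun (congrFun hM.1 i) j
    simpa [Matrix.conjTranspose_apply] using h2.symm
  have hqnn : ∀ x : Fin p → ℝ, 0 ≤ x ⬝ᵥ (Cov⁻¹ *ᵥ x) := fun x => by
    simpa using hM.posSemidef.dotProduct_mulVec_nonneg x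
  have hsπ : 0 < Real.sqrt π := Real.sqrt_pos.mpr Real.pi_pos
  have hk1 : 0 < ρ * ((2 * Real.sqrt π * γg) ^ p)⁻¹ := by positivity
  have hΓ1 : 0 < Real.Gamma ((α + p) / 2) := Real.Gamma_pos_of_pos (by positivity)
  have hΓ2 : 0 < Real.Gamma (α / 2) := Real.Gamma_pos_of_pos (by positivity)
  have hdet : 0 < Real.sqrt Cov.det := Real.sqrt_pos.mpr hCov.det_pos
  have hrp : 0 < (α * π) ^ ((p : ℝ) / 2) := Real.rpow_pos_of_pos (by positivity) _
  have hk2 : 0 < (1 - ρ) *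
      (Real.Gamma ((α + p) / 2) /
        (Real.Gamma (α / 2) * (α * π) ^ ((p : ℝ) / 2) * Real.sqrt Cov.det)) :=
    mul_pos (by linarith) (div_pos hΓ1 (mul_pos (mul_pos hΓ2 hrp) hdet))
  have hexpneg : -(α + (p : ℝ)) / 2 < 0 := by
    have h0 : (0 : ℝ) < α + p := by positivity
    linarith
  have hbasepos : ∀ x : Fin p → ℝ, 0 < 1 + (x ⬝ᵥ (Cov⁻¹ *ᵥ x)) / α := fun x =>
    add_pos_of_pos_of_nonneg one_pos (div_nonneg (hqnn x) hα.le)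
  have edot : ∀ v : Fin p → ℝ, (fun _ => (1 : ℝ)) ⬝ᵥ v = ∑ i, v i := fun v => by
    simp [dotProduct]
  have cdot : ∀ v : Fin p → ℝ,
      (fun _ => 2 * A : Fin p → ℝ) ⬝ᵥ v = 2 * A * ((fun _ => (1 : ℝ)) ⬝ᵥ v) := fun v => by
    simp [dotProduct, Finset.mul_sum]
  have hcvec : (fun _ => 2 * A : Fin p → ℝ) = (2 * A) • (fun _ => (1 : ℝ)) := by
    funext i; simp
  have hqexp : ∀ n : Fin p → ℝ,
      (n + fun _ => 2 * A) ⬝ᵥ (Cov⁻¹ *ᵥ (n + fun _ => 2 * A))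
        = n ⬝ᵥ (Cov⁻¹ *ᵥ n)
          + 4 * A * ((fun _ => (1 : ℝ)) ⬝ᵥ (Cov⁻¹ *ᵥ n))
          + 4 * A ^ 2 * ((fun _ => (1 : ℝ)) ⬝ᵥ (Cov⁻¹ *ᵥ (fun _ => (1 : ℝ)))) := by
    intro n
    rw [quad_expand _ hs, cdot (Cov⁻¹ *ᵥ n)]
    have h2 : (fun _ => 2 * A : Fin p → ℝ) ⬝ᵥ (Cov⁻¹ *ᵥ (fun _ => 2 * A))
        = 4 * A ^ 2 * ((fun _ => (1 : ℝ)) ⬝ᵥ (Cov⁻¹ *ᵥ (fun _ => (1 : ℝ)))) := by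
      rw [cdot, hcvec, Matrix.mulVec_smul, dotProduct_smul, smul_eq_mul]
      ring
    rw [h2]; ring
  have hSum : ∀ n : Fin p → ℝ,
      ∑ i, (n i + 2 * A) ^ 2 = (∑ i, n i ^ 2) + 4 * A * (∑ i, n i) + (p : ℝ) * (4 * A ^ 2) := by
    intro n
    have h : ∀ i ∈ Finset.univ, (n i + 2 * A) ^ 2 = n i ^ 2 + (4 * A) * n i + 4 * A ^ 2 :=
      fun i _ => by ring
    rw [Finset.sum_congr rfl h, Finset.sum_add_distrib, Finset.sum_add_distrib,
      ← Finset.mul_sum, Finset.sum_const, Finset.card_univ, Fintype.card_fin, nsmul_eq_mul]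
  have hγ4 : (0 : ℝ) < 4 * γg ^ 2 := by positivity
  have h4A : (0 : ℝ) < 4 * A := by linarith
  -- strict inequality on Ω_A ∩ Ω_B
  have hlow : ∀ n : Fin p → ℝ,
      (fun _ => (1 : ℝ)) ⬝ᵥ n < -((p : ℝ) * A) →
      (fun _ => (1 : ℝ)) ⬝ᵥ (Cov⁻¹ *ᵥ n)
          < -(A * ((fun _ => (1 : ℝ)) ⬝ᵥ (Cov⁻¹ *ᵥ (fun _ => (1 : ℝ))))) →
      f (n + fun _ => 2 * A) > f n := by
    intro n ha hb
    rw [edot] at ha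
    rw [hf n, hf (n + fun _ => 2 * A)]
    simp only [Pi.add_apply]
    refine add_lt_add ?_ ?_
    · apply mul_lt_mul_of_pos_left _ hk1
      apply Real.exp_lt_exp.mpr
      rw [div_eq_mul_inv, div_eq_mul_inv]
      apply mul_lt_mul_of_pos_right _ (inv_pos.mpr hγ4)
      apply neg_lt_neg
      rw [hSum n]
      nlinarith [mul_lt_mul_of_pos_left ha h4A]
    · apply mul_lt_mul_of_pos_left _ hk2
      have hql : (n + fun _ => 2 * A) ⬝ᵥ (Cov⁻¹ *ᵥ (n + fun _ => 2 * A))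
          < n ⬝ᵥ (Cov⁻¹ *ᵥ n) := by
        rw [hqexp n]
        nlinarith [mul_lt_mul_of_pos_left hb h4A]
      have hbl : 1 + ((n + fun _ => 2 * A) ⬝ᵥ (Cov⁻¹ *ᵥ (n + fun _ => 2 * A))) / α
          < 1 + (n ⬝ᵥ (Cov⁻¹ *ᵥ n)) / α := by
        apply add_lt_add_right
        rw [div_eq_mul_inv, div_eq_mul_inv]
        exact mul_lt_mul_of_pos_right hql (inv_pos.mpr hα)
      exact Real.rpow_lt_rpow_of_neg (hbasepos _) hbl hexpneg
  -- weak inequality off Ω_A ∪ Ω_B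
  have hhigh : ∀ n : Fin p → ℝ,
      -((p : ℝ) * A) ≤ (fun _ => (1 : ℝ)) ⬝ᵥ n →
      -(A * ((fun _ => (1 : ℝ)) ⬝ᵥ (Cov⁻¹ *ᵥ (fun _ => (1 : ℝ)))))
          ≤ (fun _ => (1 : ℝ)) ⬝ᵥ (Cov⁻¹ *ᵥ n) →
      f (n + fun _ => 2 * A) ≤ f n := by
    intro n ha hb
    rw [edot] at ha
    rw [hf n, hf (n + fun _ => 2 * A)]
    simp only [Pi.add_apply]
    refine add_le_add ?_ ?_
    · apply mul_le_mul_of_nonneg_left _ hk1.le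
      apply Real.exp_le_exp.mpr
      rw [div_eq_mul_inv, div_eq_mul_inv]
      apply mul_le_mul_of_nonneg_right _ (inv_pos.mpr hγ4).le
      apply neg_le_neg
      rw [hSum n]
      nlinarith [mul_le_mul_of_nonneg_left ha h4A.le]
    · apply mul_le_mul_of_nonneg_left _ hk2.le
      have hql : n ⬝ᵥ (Cov⁻¹ *ᵥ n)
          ≤ (n + fun _ => 2 * A) ⬝ᵥ (Cov⁻¹ *ᵥ (n + fun _ => 2 * A)) := by
        rw [hqexp n]
        nlinarith [mul_le_mul_of_nonneg_left hb h4A.le]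
      have hbl : 1 + (n ⬝ᵥ (Cov⁻¹ *ᵥ n)) / α
          ≤ 1 + ((n + fun _ => 2 * A) ⬝ᵥ (Cov⁻¹ *ᵥ (n + fun _ => 2 * A))) / α := by
        apply add_le_add_right
        rw [div_eq_mul_inv, div_eq_mul_inv]
        exact mul_le_mul_of_nonneg_right hql (inv_pos.mpr hα).le
      exact Real.rpow_le_rpow_of_nonpos (hbasepos _) hbl hexpneg.le
  -- nonnegativity of the density
  have hnn : ∀ x : Fin p → ℝ, 0 ≤ f x := by
    intro x
    rw [hf x]
    have h1 : (0 : ℝ) ≤ ρ * ((2 * Real.sqrt π * γg) ^ p)⁻¹ *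
        Real.exp (-(∑ i, x i ^ 2) / (4 * γg ^ 2)) := by positivity
    have h2 := mul_nonneg hk2.le (Real.rpow_nonneg (hbasepos x).le (-(α + (p : ℝ)) / 2))
    linarith
  -- integrability of the Gaussian part
  have hGint : Integrable (fun n : Fin p → ℝ =>
      Real.exp (-(∑ i, n i ^ 2) / (4 * γg ^ 2))) := by
    have hb : (0 : ℝ) < 1 / (4 * γg ^ 2) := by positivity
    have hprod := MeasureTheory.Integrable.fintype_prod
      (f := fun (_ : Fin p) (x : ℝ) => Real.exp (-(1 / (4 * γg ^ 2)) * x ^ 2))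
      (fun _ => integrable_exp_neg_mul_sq hb)
    refine hprod.congr (Filter.Eventually.of_forall fun n => ?_)
    show ∏ i, Real.exp (-(1 / (4 * γg ^ 2)) * n i ^ 2)
        = Real.exp (-(∑ i, n i ^ 2) / (4 * γg ^ 2))
    rw [← Real.exp_sum]
    congr 1
    rw [← Finset.mul_sum]
    ring
  -- integrability of the Student part
  have hTint : Integrable (fun n : Fin p → ℝ =>
      (1 + (n ⬝ᵥ (Cov⁻¹ *ᵥ n)) / α) ^ (-(α + (p : ℝ)) / 2)) := by
    obtain ⟨c, hc, hcle⟩ := posdef_lb hM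
    have hfr : (Module.finrank ℝ (Fin p → ℝ) : ℝ) < α + p := by
      rw [Module.finrank_pi, Fintype.card_fin]
      linarith
    have hbase : Integrable (fun x : Fin p → ℝ =>
        ((1 : ℝ) + ‖x‖ ^ 2) ^ (-(α + (p : ℝ)) / 2)) :=
      integrable_rpow_neg_one_add_norm_sq hfr
    set m : ℝ := min 1 (c / α) with hm
    have hm0 : 0 < m := lt_min one_pos (div_pos hc hα)
    have hnormsq : ∀ n : Fin p → ℝ, ‖n‖ ^ 2 ≤ n ⬝ᵥ n := by
      intro n
      have hdn : (0 : ℝ) ≤ n ⬝ᵥ n := Finset.sum_nonneg fun j _ => mul_self_nonneg _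
      have h1 : ‖n‖ ≤ Real.sqrt (n ⬝ᵥ n) := by
        refine (pi_norm_le_iff_of_nonneg (Real.sqrt_nonneg _)).mpr fun i => ?_
        rw [Real.norm_eq_abs, ← Real.sqrt_sq_eq_abs]
        apply Real.sqrt_le_sqrt
        have h2 : n i ^ 2 = n i * n i := sq (n i)
        rw [h2]
        exact Finset.single_le_sum (fun j _ => mul_self_nonneg (n j)) (Finset.mem_univ i)
      calc ‖n‖ ^ 2 ≤ Real.sqrt (n ⬝ᵥ n) ^ 2 := by
            apply pow_le_pow_left₀ (norm_nonneg n) h1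
        _ = n ⬝ᵥ n := Real.sq_sqrt hdn
    refine (hbase.const_mul (m ^ (-(α + (p : ℝ)) / 2))).mono' ?_
      (Filter.Eventually.of_forall fun n => ?_)
    · apply Continuous.aestronglyMeasurable
      have hqcont : Continuous fun n : Fin p → ℝ => 1 + (n ⬝ᵥ (Cov⁻¹ *ᵥ n)) / α := by
        simp only [dotProduct, mulVec]
        fun_prop
      exact hqcont.rpow_const fun x => Or.inl (hbasepos x).ne'
    · have hmα : m * α ≤ c := by
        rw [← le_div_iff₀ hα]
        exact min_le_right _ _
      have hm1 : m ≤ 1 := min_le_left _ _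
      have hqa : (n ⬝ᵥ (Cov⁻¹ *ᵥ n)) / α * α = n ⬝ᵥ (Cov⁻¹ *ᵥ n) :=
        div_mul_cancel₀ _ hα.ne'
      have key : m * (1 + ‖n‖ ^ 2) ≤ 1 + (n ⬝ᵥ (Cov⁻¹ *ᵥ n)) / α := by
        nlinarith [hqa, hmα, hcle n, hnormsq n, hqnn n, hm0.le, hc.le, hα,
          sq_nonneg ‖n‖, norm_nonneg n]
      have hTn : ‖(1 + (n ⬝ᵥ (Cov⁻¹ *ᵥ n)) / α) ^ (-(α + (p : ℝ)) / 2)‖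
          = (1 + (n ⬝ᵥ (Cov⁻¹ *ᵥ n)) / α) ^ (-(α + (p : ℝ)) / 2) := by
        rw [Real.norm_eq_abs, abs_of_nonneg (Real.rpow_nonneg (hbasepos n).le _)]
      rw [hTn]
      calc (1 + (n ⬝ᵥ (Cov⁻¹ *ᵥ n)) / α) ^ (-(α + (p : ℝ)) / 2)
          ≤ (m * (1 + ‖n‖ ^ 2)) ^ (-(α + (p : ℝ)) / 2) :=
            Real.rpow_le_rpow_of_nonpos (by positivity) key hexpneg.le
        _ = m ^ (-(α + (p : ℝ)) / 2) * ((1 : ℝ) + ‖n‖ ^ 2) ^ (-(α + (p : ℝ)) / 2) :=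
            Real.mul_rpow hm0.le (by positivity)
  -- integrability of f
  have hfint : Integrable f := by
    have h := (hGint.const_mul (ρ * ((2 * Real.sqrt π * γg) ^ p)⁻¹)).add
      (hTint.const_mul ((1 - ρ) *
        (Real.Gamma ((α + p) / 2) /
          (Real.Gamma (α / 2) * (α * π) ^ ((p : ℝ) / 2) * Real.sqrt Cov.det))))
    exact h.congr (Filter.Eventually.of_forall fun n => (hf n).symm)
  -- set inclusions
  have hsub1 : ({n : Fin p → ℝ | (fun _ => (1 : ℝ)) ⬝ᵥ n < -((p : ℝ) * A)} ∩
      {n : Fin p → ℝ | (fun _ => (1 : ℝ)) ⬝ᵥ (Cov⁻¹ *ᵥ n)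
          < -(A * ((fun _ => (1 : ℝ)) ⬝ᵥ (Cov⁻¹ *ᵥ (fun _ => (1 : ℝ)))))})
      ⊆ {n : Fin p → ℝ | f (n + fun _ => 2 * A) > f n} := by
    intro n hn
    exact hlow n hn.1 hn.2
  have hsub2 : {n : Fin p → ℝ | f (n + fun _ => 2 * A) > f n}
      ⊆ ({n : Fin p → ℝ | (fun _ => (1 : ℝ)) ⬝ᵥ n < -((p : ℝ) * A)} ∪
        {n : Fin p → ℝ | (fun _ => (1 : ℝ)) ⬝ᵥ (Cov⁻¹ *ᵥ n)
            < -(A * ((fun _ => (1 : ℝ)) ⬝ᵥ (Cov⁻¹ *ᵥ (fun _ => (1 : ℝ)))))}) := by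
    intro n hn
    by_contra hcon
    simp only [Set.mem_union, Set.mem_setOf_eq, not_or, not_lt] at hcon
    exact absurd hn (not_lt.mpr (hhigh n hcon.1 hcon.2))
  constructor
  · exact setIntegral_mono_set hfint.integrableOn (ae_of_all _ hnn)
      (HasSubset.Subset.eventuallyLE hsub1)
  · exact setIntegral_mono_set hfint.integrableOn (ae_of_all _ hnn)
      (HasSubset.Subset.eventuallyLE hsub2)
end

section
/- Let Σ ∈ ℝ^{2×2} be symmetric positive definite with equal diagonal entries, Σ = [[s, c],[c, s]]. Then Σ⁻¹e₂ = (1/(s+c))·e₂, and consequently, for every A > 0, α, γ_g > 0 and ρ ∈ [0,1], the error region of ML demodulation of BPSK under the GS density coincides exactly with the half-plane: {n ∈ ℝ² : f_M(n + 2A·e₂) > f_M(n)} = {n ∈ ℝ² : n₁ + n₂ < −2A}. -/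
open Matrix Real

private lemma mix_lt {ρ k1 k2 E E' T T' : ℝ} (hρ0 : 0 ≤ ρ) (hρ1 : ρ ≤ 1)
    (hk1 : 0 < k1) (hk2 : 0 < k2) (hE : E < E') (hT : T < T') :
    ρ * k1 * E + (1 - ρ) * k2 * T < ρ * k1 * E' + (1 - ρ) * k2 * T' := by
  rcases eq_or_lt_of_le hρ0 with h0 | h0
  · rw [← h0]; nlinarith [mul_pos hk2 (sub_pos.mpr hT)]
  · rcases eq_or_lt_of_le hρ1 with h1 | h1
    · rw [h1]; nlinarith [mul_pos hk1 (sub_pos.mpr hE)]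
    · nlinarith [mul_pos (mul_pos h0 hk1) (sub_pos.mpr hE),
        mul_pos (mul_pos (by linarith : (0:ℝ) < 1 - ρ) hk2) (sub_pos.mpr hT)]

private lemma mix_le {ρ k1 k2 E E' T T' : ℝ} (hρ0 : 0 ≤ ρ) (hρ1 : ρ ≤ 1)
    (hk1 : 0 < k1) (hk2 : 0 < k2) (hE : E' ≤ E) (hT : T' ≤ T) :
    ρ * k1 * E' + (1 - ρ) * k2 * T' ≤ ρ * k1 * E + (1 - ρ) * k2 * T := by
  nlinarith [mul_nonneg hρ0 (mul_nonneg hk1.le (sub_nonneg.mpr hE)),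
    mul_nonneg (by linarith : (0:ℝ) ≤ 1 - ρ) (mul_nonneg hk2.le (sub_nonneg.mpr hT))]

set_option maxHeartbeats 1000000 in
/-- For a symmetric positive definite `Σ = [[s, c],[c, s]] ∈ ℝ^{2×2}` with equal diagonal
entries, `Σ⁻¹e₂ = (1/(s+c))·e₂`, and consequently the ML BPSK error region under the
GS density (p = 2) is exactly the half-plane `{n : n₁ + n₂ < −2A}`. -/
theorem error_region_exact_p2 (s c : ℝ)
    (hCov : (!![s, c; c, s] : Matrix (Fin 2) (Fin 2) ℝ).PosDef) :
    ((!![s, c; c, s] : Matrix (Fin 2) (Fin 2) ℝ)⁻¹ *ᵥ (fun _ => (1 : ℝ))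
        = fun _ => 1 / (s + c))
    ∧ (∀ A α γg ρ : ℝ, 0 < A → 0 < α → 0 < γg → ρ ∈ Set.Icc (0 : ℝ) 1 →
        ∀ f : (Fin 2 → ℝ) → ℝ,
        (∀ n, f n =
            ρ * ((2 * Real.sqrt π * γg) ^ 2)⁻¹ * Real.exp (-(∑ i, n i ^ 2) / (4 * γg ^ 2))
            + (1 - ρ) *
                (Real.Gamma ((α + 2) / 2) /
                  (Real.Gamma (α / 2) * (α * π) *
                    Real.sqrt (!![s, c; c, s] : Matrix (Fin 2) (Fin 2) ℝ).det)) *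
                (1 + (n ⬝ᵥ ((!![s, c; c, s] : Matrix (Fin 2) (Fin 2) ℝ)⁻¹ *ᵥ n)) / α) ^
                  (-(α + 2) / 2)) →
        {n : Fin 2 → ℝ | f (n + fun _ => 2 * A) > f n}
          = {n : Fin 2 → ℝ | n 0 + n 1 < -(2 * A)}) := by
  -- positivity of s+c and s-c
  have h1 := hCov.dotProduct_mulVec_pos (x := ![1,1]) (by intro h; have := congrFun h 0; simp at this)
  have h2 := hCov.dotProduct_mulVec_pos (x := ![1,-1]) (by intro h; have := congrFun h 0; simp at this)
  simp [Matrix.mulVec, dotProduct, Fin.sum_univ_two] at h1 h2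
  have hsc : 0 < s + c := by nlinarith
  have hsc' : 0 < s - c := by nlinarith
  have hD : 0 < (s - c) * (s + c) := mul_pos hsc' hsc
  have hinv : (!![s, c; c, s] : Matrix (Fin 2) (Fin 2) ℝ)⁻¹
      = ((s-c)*(s+c))⁻¹ • !![s, -c; -c, s] := by
    rw [Matrix.inv_def, Matrix.adjugate_fin_two_of, Matrix.det_fin_two_of, Ring.inverse_eq_inv]
    congr 1
    ring
  have hQ : ∀ m : Fin 2 → ℝ, m ⬝ᵥ ((!![s, c; c, s] : Matrix (Fin 2) (Fin 2) ℝ)⁻¹ *ᵥ m)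
      = (s * (m 0)^2 - 2*c*(m 0)*(m 1) + s * (m 1)^2) / ((s-c)*(s+c)) := by
    intro m
    rw [hinv]
    simp [Matrix.mulVec, dotProduct, Fin.sum_univ_two]
    field_simp
    ring
  have hQnn : ∀ x y : ℝ, 0 ≤ (s * x^2 - 2*c*x*y + s * y^2) / ((s-c)*(s+c)) := by
    intro x y
    apply div_nonneg _ hD.le
    nlinarith [sq_nonneg (x+y), sq_nonneg (x-y)]
  constructor
  · funext i
    rw [hinv]
    fin_cases i <;>
      · simp [Matrix.mulVec, dotProduct, Fin.sum_univ_two]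
        field_simp
        ring
  · intro A α γg ρ hA hα hγ hρ f hf
    obtain ⟨hρ0, hρ1⟩ := hρ
    -- positive constants
    have hk1 : 0 < ((2 * Real.sqrt π * γg) ^ 2)⁻¹ := by
      have : 0 < Real.sqrt π := Real.sqrt_pos.mpr Real.pi_pos
      positivity
    have hdet : (!![s, c; c, s] : Matrix (Fin 2) (Fin 2) ℝ).det = (s-c)*(s+c) := by
      rw [Matrix.det_fin_two_of]; ring
    have hk2 : 0 < Real.Gamma ((α + 2) / 2) /
        (Real.Gamma (α / 2) * (α * π) *
          Real.sqrt (!![s, c; c, s] : Matrix (Fin 2) (Fin 2) ℝ).det) := by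
      rw [hdet]
      have g1 : 0 < Real.Gamma ((α + 2) / 2) := Real.Gamma_pos_of_pos (by linarith)
      have g2 : 0 < Real.Gamma (α / 2) := Real.Gamma_pos_of_pos (by linarith)
      have g3 : 0 < Real.sqrt ((s-c)*(s+c)) := Real.sqrt_pos.mpr hD
      have := Real.pi_pos
      positivity
    have hexp : -(α + 2) / 2 < 0 := by linarith
    ext n
    simp only [Set.mem_setOf_eq, gt_iff_lt]
    rw [hf, hf, hQ, hQ]
    simp only [Pi.add_apply, Fin.sum_univ_two]
    set k1 := ((2 * Real.sqrt π * γg) ^ 2)⁻¹ with hk1d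
    set k2 := Real.Gamma ((α + 2) / 2) /
        (Real.Gamma (α / 2) * (α * π) *
          Real.sqrt (!![s, c; c, s] : Matrix (Fin 2) (Fin 2) ℝ).det) with hk2d
    set x := n 0
    set y := n 1
    set Q := (s * x^2 - 2*c*x*y + s * y^2) / ((s-c)*(s+c)) with hQd
    set Q' := (s * (x + 2*A)^2 - 2*c*(x + 2*A)*(y + 2*A) + s * (y + 2*A)^2) / ((s-c)*(s+c))
      with hQ'd
    have hQn : 0 ≤ Q := hQnn x y
    have hQ'n : 0 ≤ Q' := hQnn _ _
    have hb : 0 < 1 + Q / α := by positivity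
    have hb' : 0 < 1 + Q' / α := by positivity
    constructor
    · -- forward: contrapose
      intro hlt
      by_contra hge
      push_neg at hge
      have ht : 0 ≤ x + y + 2*A := by linarith
      have hsum : x^2 + y^2 ≤ (x + 2*A)^2 + (y + 2*A)^2 := by nlinarith
      have h4 : 0 < 4 * γg^2 := by positivity
      have hE : Real.exp (-((x + 2*A)^2 + (y + 2*A)^2) / (4 * γg^2))
          ≤ Real.exp (-(x^2 + y^2) / (4 * γg^2)) := by
        apply Real.exp_le_exp.mpr
        rw [div_le_div_iff₀ h4 h4]
        exact mul_le_mul_of_nonneg_right (by nlinarith [mul_nonneg hA.le ht]) h4.le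
      have hQle : Q ≤ Q' := by
        have hdiff : Q' - Q = (4*A*(x+y+2*A))/(s+c) := by
          rw [hQ'd, hQd]
          field_simp
          ring
        have : 0 ≤ (4*A*(x+y+2*A))/(s+c) :=
          div_nonneg (by nlinarith) hsc.le
        linarith
      have hT : (1 + Q' / α) ^ (-(α + 2) / 2) ≤ (1 + Q / α) ^ (-(α + 2) / 2) := by
        apply Real.rpow_le_rpow_of_nonpos hb _ hexp.le
        gcongr
      exact absurd hlt (not_lt.mpr (mix_le hρ0 hρ1 hk1 hk2 hE hT))
    · intro hlt
      have ht : x + y + 2*A < 0 := by linarith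
      have hsum : (x + 2*A)^2 + (y + 2*A)^2 < x^2 + y^2 := by nlinarith
      have h4 : 0 < 4 * γg^2 := by positivity
      have hE : Real.exp (-(x^2 + y^2) / (4 * γg^2))
          < Real.exp (-((x + 2*A)^2 + (y + 2*A)^2) / (4 * γg^2)) := by
        apply Real.exp_lt_exp.mpr
        rw [div_lt_div_iff₀ h4 h4]
        exact mul_lt_mul_of_pos_right (by nlinarith [mul_pos hA (neg_pos.mpr ht)]) h4
      have hQlt : Q' < Q := by
        have hdiff : Q' - Q = (4*A*(x+y+2*A))/(s+c) := by
          rw [hQ'd, hQd]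
          field_simp
          ring
        have : (4*A*(x+y+2*A))/(s+c) < 0 :=
          div_neg_of_neg_of_pos (by nlinarith) hsc
        linarith
      have hT : (1 + Q / α) ^ (-(α + 2) / 2) < (1 + Q' / α) ^ (-(α + 2) / 2) :=
        Real.rpow_lt_rpow_of_neg hb' (by gcongr) hexp
      exact mix_lt hρ0 hρ1 hk1 hk2 hE hT
end

section
/- Let α > 0 be real, p ≥ 2 an integer, and y ∈ ℝ. Then ∫₀^∞ r^{p−2}·(1 + (y² + r²)/α)^{−(α+p)/2} dr = [α^{(α+p)/2}·Γ((p+1)/2)·Γ((α+1)/2) / ((p−1)·Γ((α+p)/2))]·(α + y²)^{−(α+1)/2}. -/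
open Real MeasureTheory


theorem real_beta_aux (a b : ℝ) (ha : 0 < a) (hb : 0 < b) :
    ∫ x in Set.Ioo (0:ℝ) 1, x ^ (a-1) * (1-x) ^ (b-1)
      = Real.Gamma a * Real.Gamma b / Real.Gamma (a+b) := by
  have hab : (0:ℝ) < Real.Gamma (a+b) := Real.Gamma_pos_of_pos (by linarith)
  have key := Complex.Gamma_mul_Gamma_eq_betaIntegral (s := (a:ℂ)) (t := (b:ℂ))
    (by simpa using ha) (by simpa using hb)
  have hbeta : Complex.betaIntegral a b
      = ((∫ x in Set.Ioo (0:ℝ) 1, x ^ (a-1) * (1-x) ^ (b-1) : ℝ) : ℂ) := by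
    rw [Complex.betaIntegral]
    rw [intervalIntegral.integral_of_le zero_le_one, MeasureTheory.integral_Ioc_eq_integral_Ioo]
    have congr1 : ∫ (t : ℝ) in Set.Ioo (0:ℝ) 1, ((t:ℂ) ^ ((a:ℂ) - 1) * ((1:ℂ) - t) ^ ((b:ℂ) - 1))
        = ∫ (t : ℝ) in Set.Ioo (0:ℝ) 1, ((t ^ (a-1) * (1-t)^(b-1) : ℝ) : ℂ) := by
      refine setIntegral_congr_fun measurableSet_Ioo (fun x hx => ?_)
      obtain ⟨hx0, hx1⟩ := hx
      rw [Complex.ofReal_mul, Complex.ofReal_cpow hx0.le, Complex.ofReal_cpow (by linarith : (0:ℝ) ≤ 1 - x)]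
      push_cast
      ring_nf
    exact congr1.trans (integral_ofReal (𝕜 := ℂ))
  rw [hbeta] at key
  have hγ : (Complex.Gamma (a+b)) = (Real.Gamma (a+b) : ℂ) := by
    rw [← Complex.ofReal_add, Complex.Gamma_ofReal]
  rw [← Complex.ofReal_add, Complex.Gamma_ofReal, Complex.Gamma_ofReal, Complex.Gamma_ofReal,
    ← Complex.ofReal_mul, ← Complex.ofReal_mul] at key
  have := Complex.ofReal_injective key
  field_simp
  linarith [this]

theorem beta_Ioi (a b : ℝ) (ha : 0 < a) (hb : 0 < b) :
    ∫ t in Set.Ioi (0:ℝ), t ^ (a-1) * (1+t) ^ (-(a+b))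
      = Real.Gamma a * Real.Gamma b / Real.Gamma (a+b) := by
  rw [← real_beta_aux a b ha hb]
  have himg : (fun t : ℝ => t / (1+t)) '' Set.Ioi 0 = Set.Ioo 0 1 := by
    ext x
    constructor
    · rintro ⟨t, ht, rfl⟩
      have ht1 : (0:ℝ) < 1 + t := by linarith [Set.mem_Ioi.mp ht]
      constructor
      · exact div_pos (Set.mem_Ioi.mp ht) ht1
      · rw [div_lt_one ht1]; linarith [Set.mem_Ioi.mp ht]
    · rintro ⟨hx0, hx1⟩
      have h1x : (0:ℝ) < 1 - x := by linarith
      refine ⟨x / (1-x), Set.mem_Ioi.mpr (div_pos hx0 h1x), ?_⟩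
      have h1x' : (1:ℝ) - x ≠ 0 := ne_of_gt h1x
      field_simp
      ring
  have hderiv : ∀ x ∈ Set.Ioi (0:ℝ),
      HasDerivWithinAt (fun t : ℝ => t / (1+t)) (((1+x)^2)⁻¹) (Set.Ioi 0) x := by
    intro x hx
    have hx1 : (1:ℝ) + x ≠ 0 := by have := Set.mem_Ioi.mp hx; positivity
    have h := (hasDerivAt_id x).div ((hasDerivAt_id x).const_add 1) hx1
    exact (h.congr_deriv (by simp only [id]; ring)).hasDerivWithinAt
  have hinj : Set.InjOn (fun t : ℝ => t / (1+t)) (Set.Ioi 0) := by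
    intro x hx y hy hxy
    have hx1 : (1:ℝ) + x ≠ 0 := by have := Set.mem_Ioi.mp hx; positivity
    have hy1 : (1:ℝ) + y ≠ 0 := by have := Set.mem_Ioi.mp hy; positivity
    field_simp at hxy
    linarith
  have key := integral_image_eq_integral_abs_deriv_smul measurableSet_Ioi hderiv hinj
    (fun x : ℝ => x ^ (a-1) * (1-x) ^ (b-1))
  rw [himg] at key
  rw [key]
  refine setIntegral_congr_fun measurableSet_Ioi (fun t ht => ?_)
  have ht0 : (0:ℝ) < t := Set.mem_Ioi.mp ht
  have ht1 : (0:ℝ) < 1 + t := by linarith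
  have e1 : (1:ℝ) - t / (1+t) = (1+t)⁻¹ := by field_simp; ring
  have e2 : (t / (1+t)) ^ (a-1) = t ^ (a-1) * (1+t) ^ (-(a-1)) := by
    rw [Real.div_rpow ht0.le ht1.le, Real.rpow_neg ht1.le, div_eq_mul_inv]
  have e3 : ((1+t):ℝ)⁻¹ ^ (b-1) = (1+t) ^ (-(b-1)) := by
    rw [Real.inv_rpow ht1.le, ← Real.rpow_neg ht1.le]
  have e4 : ((((1:ℝ)+t))^(2:ℕ))⁻¹ = ((1:ℝ)+t) ^ (-(2:ℝ)) := by
    rw [← Real.rpow_natCast ((1:ℝ)+t) 2, ← Real.rpow_neg ht1.le]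
    norm_num
  rw [smul_eq_mul, abs_of_pos (by positivity), e1, e2, e3, e4]
  rw [show -(a+b) = -(a-1) + -(b-1) + -(2:ℝ) by ring, Real.rpow_add ht1, Real.rpow_add ht1]
  ring

theorem beta_sq_Ioi (a b : ℝ) (ha : 0 < a) (hb : 0 < b) :
    ∫ u in Set.Ioi (0:ℝ), u ^ (2*a-1) * (1+u^2) ^ (-(a+b))
      = Real.Gamma a * Real.Gamma b / (2 * Real.Gamma (a+b)) := by
  have h := MeasureTheory.integral_comp_rpow_Ioi_of_pos
    (g := fun t : ℝ => t^(a-1)*(1+t)^(-(a+b))) (p := 2) two_pos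
  rw [beta_Ioi a b ha hb] at h
  have congr1 : ∫ x in Set.Ioi (0:ℝ),
        ((2:ℝ) * x^((2:ℝ)-1)) • ((fun t : ℝ => t^(a-1)*(1+t)^(-(a+b))) (x^(2:ℝ)))
      = ∫ x in Set.Ioi (0:ℝ), 2 * (x ^ (2*a-1) * (1+x^2) ^ (-(a+b))) := by
    refine setIntegral_congr_fun measurableSet_Ioi (fun x hx => ?_)
    have hx0 : (0:ℝ) < x := Set.mem_Ioi.mp hx
    have hx2 : x ^ (2:ℝ) = x ^ (2:ℕ) := by
      rw [← Real.rpow_natCast x 2]; norm_num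
    simp only [smul_eq_mul]
    rw [← hx2, ← Real.rpow_mul hx0.le]
    rw [show (2:ℝ) - 1 = (1:ℝ) by norm_num]
    rw [show (2:ℝ)*a - 1 = 1 + 2*(a-1) by ring, Real.rpow_add hx0, Real.rpow_one]
    ring
  rw [congr1, integral_const_mul] at h
  have h2 : Real.Gamma a * Real.Gamma b / (2 * Real.Gamma (a+b))
      = (Real.Gamma a * Real.Gamma b / Real.Gamma (a+b)) / 2 := by ring
  rw [h2, ← h]; ring


/-- The inner radial integral of the spherical change of coordinates in the half-space
probability of the multivariate Student-t component:
`∫₀^∞ r^{p−2}(1 + (y² + r²)/α)^{−(α+p)/2} dr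
  = α^{(α+p)/2}Γ((p+1)/2)Γ((α+1)/2)/((p−1)Γ((α+p)/2)) · (α + y²)^{−(α+1)/2}`. -/
theorem radial_integral_student (α : ℝ) (hα : 0 < α) (p : ℕ) (hp : 2 ≤ p) (y : ℝ) :
    (∫ r in Set.Ioi (0 : ℝ), r ^ (p - 2) * (1 + (y ^ 2 + r ^ 2) / α) ^ (-(α + (p : ℝ)) / 2))
      = α ^ ((α + (p : ℝ)) / 2) * Real.Gamma (((p : ℝ) + 1) / 2) * Real.Gamma ((α + 1) / 2)
          / (((p : ℝ) - 1) * Real.Gamma ((α + (p : ℝ)) / 2))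
        * (α + y ^ 2) ^ (-(α + 1) / 2) := by
  have hp2 : (2:ℝ) ≤ (p:ℝ) := by exact_mod_cast hp
  set s : ℝ := (α + (p:ℝ))/2 with hs_def
  set A : ℝ := α + y^2 with hA_def
  have hA : 0 < A := by positivity
  set c : ℝ := Real.sqrt A with hc_def
  have hc : 0 < c := Real.sqrt_pos.mpr hA
  have hc2 : c^2 = A := Real.sq_sqrt hA.le
  set a : ℝ := ((p:ℝ) - 1)/2 with ha_def
  set b : ℝ := (α + 1)/2 with hb_def
  have ha : 0 < a := by rw [ha_def]; linarith
  have hb : 0 < b := by rw [hb_def]; linarith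
  have hab : a + b = s := by rw [ha_def, hb_def, hs_def]; ring
  -- Step 1: pull out α^s
  have step1 : (∫ r in Set.Ioi (0 : ℝ),
        r ^ (p - 2) * (1 + (y ^ 2 + r ^ 2) / α) ^ (-(α + (p : ℝ)) / 2))
      = α ^ s * ∫ r in Set.Ioi (0:ℝ), r ^ (p - 2) * (A + r^2) ^ (-s) := by
    rw [← integral_const_mul]
    refine setIntegral_congr_fun measurableSet_Ioi (fun r hr => ?_)
    have hX : (0:ℝ) < A + r^2 := by positivity
    have e1 : 1 + (y^2 + r^2)/α = (A + r^2)/α := by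
      rw [hA_def]; field_simp; ring
    rw [e1, neg_div, Real.div_rpow hX.le hα.le, Real.rpow_neg hα.le, Real.rpow_neg hX.le,
      ← hs_def]
    field_simp
  -- Step 2: substitution r = c * x
  have step2 : (∫ r in Set.Ioi (0:ℝ), r ^ (p - 2) * (A + r^2) ^ (-s))
      = c * ∫ x in Set.Ioi (0:ℝ), (c*x) ^ (p - 2) * (A + (c*x)^2) ^ (-s) := by
    have h := MeasureTheory.integral_comp_mul_left_Ioi
      (g := fun r : ℝ => r ^ (p - 2) * (A + r^2) ^ (-s)) 0 hc
    rw [mul_zero] at h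
    rw [h, smul_eq_mul]
    field_simp
  -- Step 3: simplify the substituted integrand
  have step3 : (∫ x in Set.Ioi (0:ℝ), (c*x) ^ (p - 2) * (A + (c*x)^2) ^ (-s))
      = c^(p-2) * A^(-s) * ∫ x in Set.Ioi (0:ℝ), x ^ (2*a-1) * (1+x^2) ^ (-(a+b)) := by
    rw [← integral_const_mul]
    refine setIntegral_congr_fun measurableSet_Ioi (fun x hx => ?_)
    have hx0 : (0:ℝ) < x := Set.mem_Ioi.mp hx
    have e2 : A + (c*x)^2 = A * (1 + x^2) := by
      rw [mul_pow, hc2]; ring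
    have e3 : x ^ (2*a - 1) = (x:ℝ) ^ (p - 2 : ℕ) := by
      have : 2*a - 1 = ((p - 2 : ℕ) : ℝ) := by
        rw [Nat.cast_sub hp, ha_def]; push_cast; ring
      rw [this, Real.rpow_natCast]
    rw [e2, Real.mul_rpow hA.le (by positivity), mul_pow, hab, e3]
    ring
  -- Step 4: the beta value
  have step4 := beta_sq_Ioi a b ha hb
  -- Step 5: powers of c
  have hc_pow : c * c^(p-2) = A ^ (((p:ℝ)-1)/2) := by
    have h1 : c * c^(p-2) = c^(p-1) := by
      have : p - 1 = (p - 2) + 1 := by omega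
      rw [this, pow_succ]; ring
    rw [h1, hc_def, Real.sqrt_eq_rpow, ← Real.rpow_natCast (A ^ ((1:ℝ)/2)) (p-1),
      ← Real.rpow_mul hA.le]
    congr 1
    rw [Nat.cast_sub (by omega : 1 ≤ p)]
    push_cast
    ring
  have hA_pow : A ^ (((p:ℝ)-1)/2) * A^(-s) = A ^ (-(α+1)/2) := by
    rw [← Real.rpow_add hA, hs_def]
    congr 1
    ring
  -- Gamma recurrence
  have hGamma : Real.Gamma (((p:ℝ)+1)/2) = a * Real.Gamma a := by
    have : ((p:ℝ)+1)/2 = a + 1 := by rw [ha_def]; ring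
    rw [this, Real.Gamma_add_one (ne_of_gt ha)]
  have hGs : Real.Gamma s > 0 := Real.Gamma_pos_of_pos (by rw [hs_def]; linarith)
  have hp1 : (p:ℝ) - 1 > 0 := by linarith
  rw [step1, step2, step3, step4, hab]
  rw [show α ^ s * (c * (c ^ (p - 2) * A ^ (-s) *
      (Real.Gamma a * Real.Gamma b / (2 * Real.Gamma s))))
    = α ^ s * (c * c^(p-2) * A^(-s)) * (Real.Gamma a * Real.Gamma b / (2 * Real.Gamma s))
    from by ring]
  rw [hc_pow, hA_pow, hGamma]
  rw [show -(α+1)/2 = (-(α+1)/2 : ℝ) from rfl]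
  have : A ^ (((p:ℝ)-1)/2) * A ^ (-s) = A ^ (-(α+1)/2) := hA_pow
  field_simp
  ring
end

section
/- Let f : ℝ^p → ℝ be a measurable, everywhere strictly positive probability density, let N^I and N^Q be independent ℝ^p-valued random vectors each distributed with density f, and let a, b ∈ ℝ^p. Define A = {u ∈ ℝ^p : f(u + a) > f(u)} and B = {v ∈ ℝ^p : f(v + b) > f(v)}. Then the pairwise error probability P_e = P( f(N^I + a)·f(N^Q + b) > f(N^I)·f(N^Q) ) satisfies P(A)·P(B) ≤ P_e ≤ P(A) + P(B) − P(A)·P(B), where P(A) = ∫_A f and P(B) = ∫_B f. -/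
open MeasureTheory

/-- Pairwise error probability bounds: if `N^I, N^Q` are independent random vectors with a
common strictly positive density `f`, `A = {u : f(u+a) > f(u)}` and `B = {v : f(v+b) > f(v)}`,
then `P(A)·P(B) ≤ P(f(N^I+a)f(N^Q+b) > f(N^I)f(N^Q)) ≤ P(A) + P(B) − P(A)·P(B)`. -/
theorem pairwise_error_probability_bounds (p : ℕ)
    (f : (Fin p → ℝ) → ℝ) (hmeas : Measurable f) (hpos : ∀ x, 0 < f x)
    (hprob : ∫ x, f x = 1)
    {Ω : Type*} [MeasureSpace Ω] [IsProbabilityMeasure (volume : Measure Ω)]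
    (X Y : Ω → (Fin p → ℝ)) (hmX : Measurable X) (hmY : Measurable Y)
    (hindep : ProbabilityTheory.IndepFun X Y)
    (hX : ∀ s : Set (Fin p → ℝ), MeasurableSet s →
        volume (X ⁻¹' s) = ENNReal.ofReal (∫ x in s, f x))
    (hY : ∀ s : Set (Fin p → ℝ), MeasurableSet s →
        volume (Y ⁻¹' s) = ENNReal.ofReal (∫ x in s, f x))
    (a b : Fin p → ℝ) :
    ENNReal.ofReal ((∫ x in {u : Fin p → ℝ | f (u + a) > f u}, f x) *
        (∫ x in {v : Fin p → ℝ | f (v + b) > f v}, f x))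
      ≤ volume {ω : Ω | f (X ω + a) * f (Y ω + b) > f (X ω) * f (Y ω)}
    ∧ volume {ω : Ω | f (X ω + a) * f (Y ω + b) > f (X ω) * f (Y ω)}
      ≤ ENNReal.ofReal ((∫ x in {u : Fin p → ℝ | f (u + a) > f u}, f x)
          + (∫ x in {v : Fin p → ℝ | f (v + b) > f v}, f x)
          - (∫ x in {u : Fin p → ℝ | f (u + a) > f u}, f x) *
              (∫ x in {v : Fin p → ℝ | f (v + b) > f v}, f x)) := by
  set Aset := {u : Fin p → ℝ | f (u + a) > f u} with hAdef
  set Bset := {v : Fin p → ℝ | f (v + b) > f v} with hBdef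
  have hma : Measurable fun u : Fin p → ℝ => u + a := measurable_id.add_const a
  have hmb : Measurable fun u : Fin p → ℝ => u + b := measurable_id.add_const b
  have hA : MeasurableSet Aset := measurableSet_lt hmeas (hmeas.comp hma)
  have hB : MeasurableSet Bset := measurableSet_lt hmeas (hmeas.comp hmb)
  set α := ∫ x in Aset, f x with hαd
  set β := ∫ x in Bset, f x with hβd
  have hα0 : 0 ≤ α := setIntegral_nonneg hA fun x _ => (hpos x).le
  have hβ0 : 0 ≤ β := setIntegral_nonneg hB fun x _ => (hpos x).le
  have hXA : volume (X ⁻¹' Aset) = ENNReal.ofReal α := hX Aset hA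
  have hYB : volume (Y ⁻¹' Bset) = ENNReal.ofReal β := hY Bset hB
  have hinter : volume (X ⁻¹' Aset ∩ Y ⁻¹' Bset) = ENNReal.ofReal α * ENNReal.ofReal β := by
    rw [hindep.measure_inter_preimage_eq_mul Aset Bset hA hB, hXA, hYB]
  have hsub1 : X ⁻¹' Aset ∩ Y ⁻¹' Bset ⊆
      {ω : Ω | f (X ω + a) * f (Y ω + b) > f (X ω) * f (Y ω)} := by
    rintro ω ⟨h1, h2⟩
    exact mul_lt_mul'' h1 h2 (hpos _).le (hpos _).le
  have hsub2 : {ω : Ω | f (X ω + a) * f (Y ω + b) > f (X ω) * f (Y ω)} ⊆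
      X ⁻¹' Aset ∪ Y ⁻¹' Bset := by
    intro ω hω
    by_contra h
    rw [Set.mem_union, not_or] at h
    obtain ⟨h1, h2⟩ := h
    simp only [Set.mem_preimage, hAdef, hBdef, Set.mem_setOf_eq, not_lt, gt_iff_lt] at h1 h2
    exact absurd hω (not_lt.2 (mul_le_mul h1 h2 (hpos _).le (hpos _).le))
  constructor
  · calc ENNReal.ofReal (α * β) = ENNReal.ofReal α * ENNReal.ofReal β := ENNReal.ofReal_mul hα0
      _ = volume (X ⁻¹' Aset ∩ Y ⁻¹' Bset) := hinter.symm
      _ ≤ _ := measure_mono hsub1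
  · have hkey : volume (X ⁻¹' Aset) + volume (Y ⁻¹' Bset)
        = volume (X ⁻¹' Aset ∪ Y ⁻¹' Bset) + volume (X ⁻¹' Aset ∩ Y ⁻¹' Bset) :=
      (measure_union_add_inter _ (hmY hB)).symm
    have hfin : volume (X ⁻¹' Aset ∩ Y ⁻¹' Bset) ≠ ⊤ := measure_ne_top _ _
    have hunion : volume (X ⁻¹' Aset ∪ Y ⁻¹' Bset)
        = ENNReal.ofReal α + ENNReal.ofReal β - ENNReal.ofReal α * ENNReal.ofReal β := by
      rw [← hinter, ← hXA, ← hYB]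
      exact ENNReal.eq_sub_of_add_eq hfin hkey.symm
    calc volume {ω : Ω | f (X ω + a) * f (Y ω + b) > f (X ω) * f (Y ω)}
        ≤ volume (X ⁻¹' Aset ∪ Y ⁻¹' Bset) := measure_mono hsub2
      _ = ENNReal.ofReal α + ENNReal.ofReal β - ENNReal.ofReal α * ENNReal.ofReal β := hunion
      _ = ENNReal.ofReal (α + β - α * β) := by
          rw [ENNReal.ofReal_sub _ (mul_nonneg hα0 hβ0), ENNReal.ofReal_add hα0 hβ0,
            ENNReal.ofReal_mul hα0]
end
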